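/- arXiv:1702.07064 — 2 statements merged into one kernel-verified Lean document; each statement's English description precedes it below -/
import Mathlib

section
/- Let A be an n×n real matrix, B an n×m real matrix, X ⊆ ℝ^n and U ⊆ ℝ^m compact sets, h : ℝ^n × ℝ^m → ℝ continuous, and N ≥ 1. Let I be a finite nonempty index set, z : I → ℝ^n, c : I → ℝ, p the barycentric cost function from z and c, CS = convexHull ℝ {z i : i ∈ I}, and Q the LMPC value function. If the feasible set at x is nonempty, then the infimum defining Q(x) is attained: there exist u*_0, …, u*_{N−1} ∈ U with generated states x*_0 = x, x*_{k+1} = A x*_k + B u*_k satisfying x*_k ∈ X for k < N and x*_N ∈ CS, such that ∑_{k=0}^{N−1} h(x*_k, u*_k) + p(x*_N) = Q(x). -/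
/-- The barycentric cost function built from stored points `z` and stored costs `c`:
`p(x) = sInf { ∑ i, λ i * c i : λ ≥ 0, ∑ λ = 1, ∑ λ • z = x }`. -/
noncomputable def barycentric {n : ℕ} {ι : Type*} [Fintype ι]
    (z : ι → Fin n → ℝ) (c : ι → ℝ) (x : Fin n → ℝ) : ℝ :=
  sInf {s : ℝ | ∃ lam : ι → ℝ, (∀ i, 0 ≤ lam i) ∧ (∑ i, lam i) = 1 ∧
    (∑ i, lam i • z i) = x ∧ s = ∑ i, lam i * c i}

/-- Feasibility of the LMPC finite-time optimal control problem with horizon `N` at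
initial state `x`. -/
def Feasible {n m : ℕ} (A : Matrix (Fin n) (Fin n) ℝ) (B : Matrix (Fin n) (Fin m) ℝ)
    (X : Set (Fin n → ℝ)) (U : Set (Fin m → ℝ)) (CS : Set (Fin n → ℝ)) (N : ℕ)
    (x : Fin n → ℝ) (u : ℕ → Fin m → ℝ) (xs : ℕ → Fin n → ℝ) : Prop :=
  xs 0 = x ∧ (∀ k < N, xs (k + 1) = A.mulVec (xs k) + B.mulVec (u k)) ∧
    (∀ k < N, xs k ∈ X) ∧ (∀ k < N, u k ∈ U) ∧ xs N ∈ CS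

/-- The LMPC value function `Q` with horizon `N`, stage cost `h`, terminal set `CS`
and terminal cost `p`. -/
noncomputable def lmpcValue {n m : ℕ} (A : Matrix (Fin n) (Fin n) ℝ)
    (B : Matrix (Fin n) (Fin m) ℝ) (X : Set (Fin n → ℝ)) (U : Set (Fin m → ℝ))
    (CS : Set (Fin n → ℝ)) (N : ℕ) (h : (Fin n → ℝ) → (Fin m → ℝ) → ℝ)
    (p : (Fin n → ℝ) → ℝ) (x : Fin n → ℝ) : ℝ :=
  sInf {s : ℝ | ∃ u xs, Feasible A B X U CS N x u xs ∧
    s = (∑ k ∈ Finset.range N, h (xs k) (u k)) + p (xs N)}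

/-! ### Auxiliary lemmas -/

lemma mem_hull_iff' {n : ℕ} {ι : Type*} [Fintype ι] (z : ι → Fin n → ℝ) (y : Fin n → ℝ) :
    y ∈ convexHull ℝ (Set.range z) ↔
      ∃ lam : ι → ℝ, (∀ i, 0 ≤ lam i) ∧ (∑ i, lam i) = 1 ∧ (∑ i, lam i • z i) = y := by
  constructor
  · intro hy
    rw [convexHull_range_eq_exists_affineCombination] at hy
    obtain ⟨s, w, hw0, hw1, hx⟩ := hy
    classical
    refine ⟨fun i => if i ∈ s then w i else 0, fun i => ?_, ?_, ?_⟩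
    · by_cases hi : i ∈ s <;> simp [hi, hw0 i]
    · simpa [Finset.sum_ite_mem] using hw1
    · rw [Finset.affineCombination_eq_linear_combination s z w hw1] at hx
      rw [← hx]
      simp [ite_smul, Finset.sum_ite_mem]
  · rintro ⟨lam, h0, h1, hy⟩
    rw [convexHull_range_eq_exists_affineCombination]
    exact ⟨Finset.univ, lam, fun i _ => h0 i, h1,
      by rw [Finset.affineCombination_eq_linear_combination _ z lam h1]; exact hy⟩

/-- The state sequence generated from `x` by inputs `u`. -/
noncomputable def stSeq {n m : ℕ} (A : Matrix (Fin n) (Fin n) ℝ) (B : Matrix (Fin n) (Fin m) ℝ)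
    (x : Fin n → ℝ) (u : ℕ → Fin m → ℝ) : ℕ → Fin n → ℝ
  | 0 => x
  | k + 1 => A.mulVec (stSeq A B x u k) + B.mulVec (u k)

lemma stSeq_continuous {n m : ℕ} (A : Matrix (Fin n) (Fin n) ℝ) (B : Matrix (Fin n) (Fin m) ℝ)
    (x : Fin n → ℝ) (k : ℕ) : Continuous fun u : ℕ → Fin m → ℝ => stSeq A B x u k := by
  induction k with
  | zero => exact continuous_const
  | succ k ih =>
      exact (((Matrix.mulVecLin A).continuous_of_finiteDimensional).comp ih).add
        (((Matrix.mulVecLin B).continuous_of_finiteDimensional).comp (continuous_apply k))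

lemma eq_stSeq {n m N : ℕ} {A : Matrix (Fin n) (Fin n) ℝ} {B : Matrix (Fin n) (Fin m) ℝ}
    {x : Fin n → ℝ} {u : ℕ → Fin m → ℝ} {xs : ℕ → Fin n → ℝ} (hx0 : xs 0 = x)
    (hrec : ∀ k < N, xs (k + 1) = A.mulVec (xs k) + B.mulVec (u k)) :
    ∀ k ≤ N, xs k = stSeq A B x u k := by
  intro k hk
  induction k with
  | zero => simpa [stSeq] using hx0
  | succ k ih =>
      have hkN : k < N := hk
      rw [hrec k hkN, ih hkN.le]
      simp [stSeq]

lemma bary_aux {n : ℕ} {ι : Type*} [Fintype ι] (z : ι → Fin n → ℝ) (c : ι → ℝ) (y : Fin n → ℝ) :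
    {s : ℝ | ∃ lam : ι → ℝ, (∀ i, 0 ≤ lam i) ∧ (∑ i, lam i) = 1 ∧
      (∑ i, lam i • z i) = y ∧ s = ∑ i, lam i * c i} =
    (fun lam : ι → ℝ => ∑ i, lam i * c i) ''
      (stdSimplex ℝ ι ∩ {lam | (∑ i, lam i • z i) = y}) := by
  ext s
  constructor
  · rintro ⟨lam, h0, h1, hy, rfl⟩
    exact ⟨lam, ⟨⟨h0, h1⟩, hy⟩, rfl⟩
  · rintro ⟨lam, ⟨⟨h0, h1⟩, hy⟩, rfl⟩
    exact ⟨lam, h0, h1, hy, rfl⟩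

lemma T_compact {n : ℕ} {ι : Type*} [Fintype ι] (z : ι → Fin n → ℝ) (y : Fin n → ℝ) :
    IsCompact (stdSimplex ℝ ι ∩ {lam : ι → ℝ | (∑ i, lam i • z i) = y}) :=
  (isCompact_stdSimplex ℝ ι).inter_right
    (isClosed_eq (continuous_finset_sum _ fun i _ => (continuous_apply i).smul continuous_const)
      continuous_const)

lemma g_cont {ι : Type*} [Fintype ι] (c : ι → ℝ) :
    Continuous (fun lam : ι → ℝ => ∑ i, lam i * c i) :=
  continuous_finset_sum _ fun i _ => (continuous_apply i).mul continuous_const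

lemma bary_le {n : ℕ} {ι : Type*} [Fintype ι] (z : ι → Fin n → ℝ) (c : ι → ℝ)
    {y : Fin n → ℝ} {lam : ι → ℝ} (h0 : ∀ i, 0 ≤ lam i) (h1 : (∑ i, lam i) = 1)
    (hy : (∑ i, lam i • z i) = y) :
    barycentric z c y ≤ ∑ i, lam i * c i := by
  refine csInf_le ?_ ⟨lam, h0, h1, hy, rfl⟩
  rw [bary_aux]
  exact ((T_compact z y).image (g_cont c)).bddBelow

lemma bary_attained {n : ℕ} {ι : Type*} [Fintype ι] (z : ι → Fin n → ℝ) (c : ι → ℝ)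
    {y : Fin n → ℝ} (hy : y ∈ convexHull ℝ (Set.range z)) :
    ∃ lam : ι → ℝ, (∀ i, 0 ≤ lam i) ∧ (∑ i, lam i) = 1 ∧ (∑ i, lam i • z i) = y ∧
      (∑ i, lam i * c i) = barycentric z c y := by
  obtain ⟨lam0, h0, h1, hy0⟩ := (mem_hull_iff' z y).mp hy
  have hTne : (stdSimplex ℝ ι ∩ {lam : ι → ℝ | (∑ i, lam i • z i) = y}).Nonempty :=
    ⟨lam0, ⟨h0, h1⟩, hy0⟩
  obtain ⟨lam, hlam, hmin⟩ := (T_compact z y).exists_isMinOn hTne (g_cont c).continuousOn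
  refine ⟨lam, hlam.1.1, hlam.1.2, hlam.2, ?_⟩
  unfold barycentric
  rw [bary_aux]
  refine le_antisymm (le_csInf ⟨_, Set.mem_image_of_mem _ hlam⟩ ?_)
    (csInf_le ((T_compact z y).image (g_cont c)).bddBelow (Set.mem_image_of_mem _ hlam))
  rintro s ⟨lam', hlam', rfl⟩
  exact hmin hlam'

/-- Under compactness of the constraint sets and continuity of the stage
cost, the infimum defining the LMPC value function is attained whenever the feasible set
is nonempty. -/
theorem lmpc_minimizer_exists
    {n m : ℕ} {ι : Type*} [Fintype ι] [Nonempty ι]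
    (A : Matrix (Fin n) (Fin n) ℝ) (B : Matrix (Fin n) (Fin m) ℝ)
    (X : Set (Fin n → ℝ)) (hX : IsCompact X)
    (U : Set (Fin m → ℝ)) (hU : IsCompact U)
    (h : (Fin n → ℝ) → (Fin m → ℝ) → ℝ)
    (hcont : Continuous (fun q : (Fin n → ℝ) × (Fin m → ℝ) => h q.1 q.2))
    (N : ℕ) (hN : 1 ≤ N)
    (z : ι → Fin n → ℝ) (c : ι → ℝ)
    (x : Fin n → ℝ)
    (hfeas : ∃ u xs, Feasible A B X U (convexHull ℝ (Set.range z)) N x u xs) :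
    ∃ u xs, Feasible A B X U (convexHull ℝ (Set.range z)) N x u xs ∧
      (∑ k ∈ Finset.range N, h (xs k) (u k)) + barycentric z c (xs N) =
        lmpcValue A B X U (convexHull ℝ (Set.range z)) N h (barycentric z c) x := by
  classical
  obtain ⟨u₀, xs₀, hF₀⟩ := hfeas
  have hu00 : u₀ 0 ∈ U := hF₀.2.2.2.1 0 hN
  set st : (ℕ → Fin m → ℝ) → ℕ → Fin n → ℝ := stSeq A B x with hst
  set F : (ι → ℝ) × (ℕ → Fin m → ℝ) → ℝ :=
    fun q => (∑ k ∈ Finset.range N, h (st q.2 k) (q.2 k)) + ∑ i, q.1 i * c i with hFdef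
  have Fcont : Continuous F := by
    apply Continuous.add
    · refine continuous_finset_sum _ fun k _ => ?_
      exact hcont.comp (((stSeq_continuous A B x k).comp continuous_snd).prodMk
        ((continuous_apply k).comp continuous_snd))
    · exact (g_cont c).comp continuous_fst
  set K : Set ((ι → ℝ) × (ℕ → Fin m → ℝ)) :=
    (stdSimplex ℝ ι ×ˢ Set.pi Set.univ fun _ : ℕ => U) ∩
    ({q | ∀ k, k < N → st q.2 k ∈ X} ∩ {q | (∑ i, q.1 i • z i) = st q.2 N}) with hKdef
  have Kcpt : IsCompact K := by
    apply IsCompact.inter_right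
    · exact (isCompact_stdSimplex ℝ ι).prod (isCompact_univ_pi fun _ => hU)
    · apply IsClosed.inter
      · have hset : {q : (ι → ℝ) × (ℕ → Fin m → ℝ) | ∀ k, k < N → st q.2 k ∈ X} =
            ⋂ k, {q | k < N → st q.2 k ∈ X} := by
          ext q; simp
        rw [hset]
        refine isClosed_iInter fun k => ?_
        by_cases hk : k < N
        · simp only [hk, true_implies]
          exact hX.isClosed.preimage ((stSeq_continuous A B x k).comp continuous_snd)
        · simp [hk]
      · exact isClosed_eq
          (continuous_finset_sum _ fun i _ =>
            ((continuous_apply i).comp continuous_fst).smul continuous_const)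
          ((stSeq_continuous A B x N).comp continuous_snd)
  -- From any feasible pair and any representation of the terminal state, a point of `K`
  -- with the corresponding cost.
  have mod : ∀ (u : ℕ → Fin m → ℝ) (xs : ℕ → Fin n → ℝ),
      Feasible A B X U (convexHull ℝ (Set.range z)) N x u xs →
      ∀ lam : ι → ℝ, (∀ i, 0 ≤ lam i) → (∑ i, lam i) = 1 → (∑ i, lam i • z i) = xs N →
      ∃ q ∈ K, F q = (∑ k ∈ Finset.range N, h (xs k) (u k)) + ∑ i, lam i * c i := by
    intro u xs hFe lam h0 h1 hy
    obtain ⟨hx0, hrec, hXmem, hUmem, _⟩ := hFe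
    set u' : ℕ → Fin m → ℝ := fun k => if k < N then u k else u₀ 0 with hu'
    have hxs : ∀ k ≤ N, xs k = st u' k := by
      refine eq_stSeq hx0 fun k hk => ?_
      rw [hrec k hk]
      simp [hu', hk]
    refine ⟨(lam, u'), ⟨⟨⟨h0, h1⟩, fun k _ => ?_⟩, fun k hk => ?_, ?_⟩, ?_⟩
    · by_cases hk : k < N
      · simpa [hu', hk] using hUmem k hk
      · simpa [hu', hk] using hu00
    · rw [← hxs k hk.le]; exact hXmem k hk
    · show (∑ i, lam i • z i) = st u' N
      rw [← hxs N le_rfl]; exact hy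
    · simp only [hFdef]
      congr 1
      refine Finset.sum_congr rfl fun k hk => ?_
      have hk' : k < N := Finset.mem_range.mp hk
      rw [← hxs k hk'.le]
      simp [hu', hk']
  -- nonemptiness of K
  obtain ⟨lam₀, hl0, hl1, hly⟩ := (mem_hull_iff' z (xs₀ N)).mp hF₀.2.2.2.2
  obtain ⟨q₁, hq₁K, _⟩ := mod u₀ xs₀ hF₀ lam₀ hl0 hl1 hly
  obtain ⟨q₀, hq₀K, hq₀min⟩ := Kcpt.exists_isMinOn ⟨q₁, hq₁K⟩ Fcont.continuousOn
  -- the candidate minimizer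
  have hq₀simplex := hq₀K.1.1
  have hq₀U : ∀ k, q₀.2 k ∈ U := fun k => hq₀K.1.2 k (Set.mem_univ k)
  have hq₀X : ∀ k, k < N → st q₀.2 k ∈ X := hq₀K.2.1
  have hq₀term : (∑ i, q₀.1 i • z i) = st q₀.2 N := hq₀K.2.2
  have hFeas : Feasible A B X U (convexHull ℝ (Set.range z)) N x q₀.2 (st q₀.2) := by
    refine ⟨rfl, fun k _ => rfl, hq₀X, fun k _ => hq₀U k, ?_⟩
    exact (mem_hull_iff' z _).mpr ⟨q₀.1, hq₀simplex.1, hq₀simplex.2, hq₀term⟩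
  set val : ℝ := (∑ k ∈ Finset.range N, h (st q₀.2 k) (q₀.2 k)) +
    barycentric z c (st q₀.2 N) with hvaldef
  set Qset : Set ℝ := {s : ℝ | ∃ u xs,
      Feasible A B X U (convexHull ℝ (Set.range z)) N x u xs ∧
      s = (∑ k ∈ Finset.range N, h (xs k) (u k)) + barycentric z c (xs N)} with hQdef
  have hQval : lmpcValue A B X U (convexHull ℝ (Set.range z)) N h (barycentric z c) x
      = sInf Qset := rfl
  have hmemQ : val ∈ Qset := ⟨q₀.2, st q₀.2, hFeas, rfl⟩
  have hlb : ∀ s ∈ Qset, F q₀ ≤ s := by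
    rintro s ⟨u, xs, hFe, rfl⟩
    obtain ⟨lam, h0, h1, hy, hval⟩ := bary_attained z c hFe.2.2.2.2
    obtain ⟨q, hqK, hqF⟩ := mod u xs hFe lam h0 h1 hy
    calc F q₀ ≤ F q := hq₀min hqK
      _ = _ := by rw [hqF, hval]
  have hval_le : val ≤ F q₀ := by
    have := bary_le z c hq₀simplex.1 hq₀simplex.2 hq₀term
    exact add_le_add_right this (∑ k ∈ Finset.range N, h (st q₀.2 k) (q₀.2 k))
  have h1' : sInf Qset ≤ val := csInf_le ⟨F q₀, hlb⟩ hmemQ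
  have h2' : F q₀ ≤ sInf Qset := le_csInf ⟨val, hmemQ⟩ hlb
  exact ⟨q₀.2, st q₀.2, hFeas, by rw [hQval]; linarith⟩
end

section
/- Theorem 1 (asymptotic convergence of the LMPC closed loop). Let A be an n×n real matrix, B an n×m real matrix, X ⊆ ℝ^n a compact convex set, U ⊆ ℝ^m a compact convex set, x_F ∈ X, and h : ℝ^n × ℝ^m → ℝ continuous, jointly convex, nonnegative, with h(x, u) > 0 whenever x ≠ x_F and u ∈ U. Let I be a finite nonempty index set with stored states z : I → ℝ^n satisfying z i ∈ X, stored inputs v : I → ℝ^m with v i ∈ U, a successor map σ : I → I with z (σ i) = A (z i) + B (v i), and stored costs c : I → ℝ with c i ≥ 0 and c i = h(z i, v i) + c (σ i) for all i; let p be the barycentric cost function from z and c, CS = convexHull ℝ {z i : i ∈ I}, and Q the LMPC value function with horizon N ≥ 1. Let (x_t)_{t∈ℕ}, (u_t)_{t∈ℕ} be closed-loop sequences such that x_0 is a feasible state, x_{t+1} = A x_t + B u_t, and for every t there exists a feasible solution for initial state x_t attaining Q(x_t) whose first input is u_t. Then x_t ∈ X for all t ≥ 1 and x_t → x_F as t →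 ∞. -/
lemma exists_convex_weights {n : ℕ} {ι : Type*} [Fintype ι] (z : ι → Fin n → ℝ)
    {y : Fin n → ℝ} (hy : y ∈ convexHull ℝ (Set.range z)) :
    ∃ lam : ι → ℝ, (∀ i, 0 ≤ lam i) ∧ (∑ i, lam i) = 1 ∧ (∑ i, lam i • z i) = y := by
  classical
  rw [convexHull_range_eq_exists_affineCombination] at hy
  obtain ⟨s, w, hw0, hw1, hws⟩ := hy
  refine ⟨fun i => if i ∈ s then w i else 0, ?_, ?_, ?_⟩
  · intro i; dsimp only; split_ifs with hi
    exacts [hw0 i hi, le_rfl]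
  · rw [Finset.sum_ite_mem, Finset.univ_inter]; exact hw1
  · rw [← hws, Finset.affineCombination_eq_linear_combination s z w hw1]
    simp only [ite_smul, zero_smul]
    rw [Finset.sum_ite_mem, Finset.univ_inter]

lemma barycentric_nonneg {n : ℕ} {ι : Type*} [Fintype ι]
    (z : ι → Fin n → ℝ) (c : ι → ℝ) (hcpos : ∀ i, 0 ≤ c i) (y : Fin n → ℝ) :
    0 ≤ barycentric z c y := by
  apply Real.sInf_nonneg
  rintro s ⟨lam, h0, -, -, rfl⟩
  exact Finset.sum_nonneg fun i _ => mul_nonneg (h0 i) (hcpos i)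

lemma barycentric_le {n : ℕ} {ι : Type*} [Fintype ι]
    (z : ι → Fin n → ℝ) (c : ι → ℝ) (hcpos : ∀ i, 0 ≤ c i) {y : Fin n → ℝ}
    {lam : ι → ℝ} (h0 : ∀ i, 0 ≤ lam i) (h1 : (∑ i, lam i) = 1)
    (hzy : (∑ i, lam i • z i) = y) :
    barycentric z c y ≤ ∑ i, lam i * c i := by
  apply csInf_le
  · refine ⟨0, ?_⟩
    rintro s ⟨l, hl0, -, -, rfl⟩
    exact Finset.sum_nonneg fun i _ => mul_nonneg (hl0 i) (hcpos i)
  · exact ⟨lam, h0, h1, hzy, rfl⟩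

lemma mulVec_sum_smul {n m : ℕ} {ι : Type*} [Fintype ι] (A : Matrix (Fin n) (Fin m) ℝ)
    (lam : ι → ℝ) (q : ι → Fin m → ℝ) :
    A.mulVec (∑ i, lam i • q i) = ∑ i, lam i • A.mulVec (q i) := by
  simp only [← Matrix.mulVecLin_apply, map_sum, map_smul]

/-- Theorem 1, asymptotic convergence of the LMPC closed loop: the
closed-loop trajectory remains in the state constraint set and converges to the
equilibrium `x_F`. -/
theorem lmpc_closed_loop_convergence
    {n m : ℕ} {ι : Type*} [Fintype ι] [Nonempty ι]
    (A : Matrix (Fin n) (Fin n) ℝ) (B : Matrix (Fin n) (Fin m) ℝ)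
    (X : Set (Fin n → ℝ)) (hXc : IsCompact X) (hXconv : Convex ℝ X)
    (U : Set (Fin m → ℝ)) (hUc : IsCompact U) (hUconv : Convex ℝ U)
    (xF : Fin n → ℝ) (hxF : xF ∈ X)
    (h : (Fin n → ℝ) → (Fin m → ℝ) → ℝ)
    (hcont : Continuous (fun q : (Fin n → ℝ) × (Fin m → ℝ) => h q.1 q.2))
    (hconv : ConvexOn ℝ Set.univ (fun q : (Fin n → ℝ) × (Fin m → ℝ) => h q.1 q.2))
    (hnonneg : ∀ x u, 0 ≤ h x u)
    (hposdef : ∀ x u, x ≠ xF → u ∈ U → 0 < h x u)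
    (z : ι → Fin n → ℝ) (hz : ∀ i, z i ∈ X)
    (v : ι → Fin m → ℝ) (hv : ∀ i, v i ∈ U)
    (σ : ι → ι) (hσ : ∀ i, z (σ i) = A.mulVec (z i) + B.mulVec (v i))
    (c : ι → ℝ) (hcpos : ∀ i, 0 ≤ c i) (hc : ∀ i, c i = h (z i) (v i) + c (σ i))
    (N : ℕ) (hN : 1 ≤ N)
    -- the closed-loop sequences
    (x : ℕ → Fin n → ℝ) (u : ℕ → Fin m → ℝ)
    (hx0 : ∃ u0 xs0, Feasible A B X U (convexHull ℝ (Set.range z)) N (x 0) u0 xs0)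
    (hdyn : ∀ t, x (t + 1) = A.mulVec (x t) + B.mulVec (u t))
    (hcl : ∀ t, ∃ us xs,
      Feasible A B X U (convexHull ℝ (Set.range z)) N (x t) us xs ∧
      us 0 = u t ∧
      (∑ k ∈ Finset.range N, h (xs k) (us k)) + barycentric z c (xs N) =
        lmpcValue A B X U (convexHull ℝ (Set.range z)) N h (barycentric z c) (x t)) :
    (∀ t, 1 ≤ t → x t ∈ X) ∧
      Filter.Tendsto x Filter.atTop (nhds xF) := by
  classical
  haveI : DecidableEq ι := Classical.decEq ι
  obtain ⟨M, rfl⟩ : ∃ M, N = M + 1 := ⟨N - 1, by omega⟩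
  have hCSX : convexHull ℝ (Set.range z) ⊆ X :=
    convexHull_min (Set.range_subset_iff.mpr hz) hXconv
  have hpnn : ∀ y, 0 ≤ barycentric z c y := barycentric_nonneg z c hcpos
  have hQbdd : ∀ y : Fin n → ℝ, BddBelow {s : ℝ | ∃ us xs,
      Feasible A B X U (convexHull ℝ (Set.range z)) (M + 1) y us xs ∧
      s = (∑ k ∈ Finset.range (M + 1), h (xs k) (us k)) + barycentric z c (xs (M + 1))} := by
    intro y
    refine ⟨0, ?_⟩
    rintro s ⟨us, xs, -, rfl⟩
    exact add_nonneg (Finset.sum_nonneg fun k _ => hnonneg _ _) (hpnn _)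
  have hxX : ∀ t, x t ∈ X := by
    intro t
    obtain ⟨us, xs, ⟨h0, -, hXk, -, -⟩, -, -⟩ := hcl t
    rw [← h0]
    exact hXk 0 (Nat.succ_pos M)
  have huU : ∀ t, u t ∈ U := by
    intro t
    obtain ⟨us, xs, ⟨-, -, -, hUk, -⟩, hu0, -⟩ := hcl t
    rw [← hu0]
    exact hUk 0 (Nat.succ_pos M)
  -- the key value-function decrease
  have key : ∀ t, lmpcValue A B X U (convexHull ℝ (Set.range z)) (M + 1) h
      (barycentric z c) (x (t + 1)) + h (x t) (u t) ≤
      lmpcValue A B X U (convexHull ℝ (Set.range z)) (M + 1) h (barycentric z c) (x t) := by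
    intro t
    obtain ⟨us, xs, ⟨hxs0, hdk, hXk, hUk, hCSN⟩, hu0, hval⟩ := hcl t
    have hx1 : x (t + 1) = xs 1 := by
      rw [hdyn t, ← hxs0, ← hu0, ← hdk 0 (Nat.succ_pos M)]
    refine le_of_forall_pos_le_add ?_
    intro ε hε
    -- near-optimal weights at xs (M+1)
    have hSne : Set.Nonempty {s : ℝ | ∃ lam : ι → ℝ, (∀ i, 0 ≤ lam i) ∧ (∑ i, lam i) = 1 ∧
        (∑ i, lam i • z i) = xs (M + 1) ∧ s = ∑ i, lam i * c i} := by
      obtain ⟨lam, h0, h1, h2⟩ := exists_convex_weights z hCSN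
      exact ⟨_, lam, h0, h1, h2, rfl⟩
    obtain ⟨a, ⟨lam, hlam0, hlam1, hlamz, ha⟩, halt⟩ := Real.lt_sInf_add_pos hSne hε
    have halt' : a < barycentric z c (xs (M + 1)) + ε := halt
    set w : Fin m → ℝ := ∑ i, lam i • v i with hw
    set y' : Fin n → ℝ := ∑ i, lam i • z (σ i) with hy'
    set us' : ℕ → Fin m → ℝ := fun k => if k < M then us (k + 1) else w with hus'
    set xs' : ℕ → Fin n → ℝ := fun k => if k ≤ M then xs (k + 1) else y' with hxs'
    have hxs'k : ∀ k, k ≤ M → xs' k = xs (k + 1) := fun k hk => by simp [hxs', hk]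
    have hxs'N : xs' (M + 1) = y' := by simp [hxs']
    have hus'k : ∀ k, k < M → us' k = us (k + 1) := fun k hk => by simp [hus', hk]
    have hus'M : us' M = w := by simp [hus']
    have hwU : w ∈ U := hUconv.sum_mem (fun i _ => hlam0 i) hlam1 (fun i _ => hv i)
    have hy'CS : y' ∈ convexHull ℝ (Set.range z) :=
      (convex_convexHull ℝ _).sum_mem (fun i _ => hlam0 i) hlam1
        (fun i _ => subset_convexHull ℝ _ ⟨σ i, rfl⟩)
    have hy'dyn : y' = A.mulVec (xs (M + 1)) + B.mulVec w := by
      calc y' = ∑ i, lam i • (A.mulVec (z i) + B.mulVec (v i)) := by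
            rw [hy']; exact Finset.sum_congr rfl fun i _ => by rw [hσ i]
        _ = (∑ i, lam i • A.mulVec (z i)) + ∑ i, lam i • B.mulVec (v i) := by
            simp [smul_add, Finset.sum_add_distrib]
        _ = A.mulVec (xs (M + 1)) + B.mulVec w := by
            rw [← mulVec_sum_smul, ← mulVec_sum_smul, hlamz]
    have feas' : Feasible A B X U (convexHull ℝ (Set.range z)) (M + 1) (x (t + 1)) us' xs' := by
      refine ⟨?_, ?_, ?_, ?_, ?_⟩
      · rw [hxs'k 0 (Nat.zero_le M)]
        exact hx1.symm
      · intro k hk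
        by_cases hkM : k < M
        · rw [hxs'k (k + 1) (by omega), hxs'k k (by omega), hus'k k hkM]
          exact hdk (k + 1) (by omega)
        · have hkeq : k = M := by omega
          rw [hkeq, hxs'N, hxs'k M le_rfl, hus'M]
          exact hy'dyn
      · intro k hk
        rw [hxs'k k (by omega)]
        by_cases hkM : k < M
        · exact hXk (k + 1) (by omega)
        · have hkeq : k = M := by omega
          rw [hkeq]
          exact hCSX hCSN
      · intro k hk
        by_cases hkM : k < M
        · rw [hus'k k hkM]; exact hUk (k + 1) (by omega)
        · have hkeq : k = M := by omega
          rw [hkeq, hus'M]; exact hwU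
      · rw [hxs'N]; exact hy'CS
    -- pushforward weights realize y'
    set mu : ι → ℝ := fun j => ∑ i ∈ Finset.univ.filter (fun i => σ i = j), lam i with hmu
    have hmu0 : ∀ j, 0 ≤ mu j := fun j => Finset.sum_nonneg fun i _ => hlam0 i
    have hmu1 : ∑ j, mu j = 1 := by
      simp only [hmu]
      rw [Finset.sum_fiberwise]
      exact hlam1
    have hmuz : ∑ j, mu j • z j = y' := by
      calc ∑ j, mu j • z j
          = ∑ j, ∑ i ∈ Finset.univ.filter (fun i => σ i = j), lam i • z (σ i) := by
            refine Finset.sum_congr rfl fun j _ => ?_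
            rw [hmu, Finset.sum_smul]
            exact Finset.sum_congr rfl fun i hi => by rw [(Finset.mem_filter.mp hi).2]
        _ = ∑ i, lam i • z (σ i) := Finset.sum_fiberwise _ _ _
        _ = y' := hy'.symm
    have hmuc : ∑ j, mu j * c j = ∑ i, lam i * c (σ i) := by
      calc ∑ j, mu j * c j
          = ∑ j, ∑ i ∈ Finset.univ.filter (fun i => σ i = j), lam i * c (σ i) := by
            refine Finset.sum_congr rfl fun j _ => ?_
            rw [hmu, Finset.sum_mul]
            exact Finset.sum_congr rfl fun i hi => by rw [(Finset.mem_filter.mp hi).2]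
        _ = ∑ i, lam i * c (σ i) := Finset.sum_fiberwise _ _ _
    have hpy' : barycentric z c y' ≤ ∑ i, lam i * c (σ i) := by
      rw [← hmuc]
      exact barycentric_le z c hcpos hmu0 hmu1 hmuz
    -- Jensen
    have hpair : ∑ i, lam i • ((z i, v i) : (Fin n → ℝ) × (Fin m → ℝ)) = (xs (M + 1), w) := by
      rw [Prod.ext_iff]
      constructor
      · simp only [Prod.fst_sum, Prod.smul_fst]
        exact hlamz
      · simp only [Prod.snd_sum, Prod.smul_snd, hw]
    have hjensen : h (xs (M + 1)) w ≤ ∑ i, lam i * h (z i) (v i) := by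
      have H := hconv.map_sum_le (t := Finset.univ) (w := lam)
        (p := fun i => ((z i, v i) : (Fin n → ℝ) × (Fin m → ℝ)))
        (fun i _ => hlam0 i) hlam1 (fun i _ => Set.mem_univ _)
      rw [hpair] at H
      simpa [smul_eq_mul] using H
    -- cost of the candidate
    have hcost' : (∑ k ∈ Finset.range (M + 1), h (xs' k) (us' k))
        = (∑ k ∈ Finset.range M, h (xs (k + 1)) (us (k + 1))) + h (xs (M + 1)) w := by
      rw [Finset.sum_range_succ]
      congr 1
      · refine Finset.sum_congr rfl fun k hk => ?_
        have hk' := Finset.mem_range.mp hk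
        rw [hxs'k k (by omega), hus'k k hk']
      · rw [hxs'k M le_rfl, hus'M]
    have hQle : lmpcValue A B X U (convexHull ℝ (Set.range z)) (M + 1) h
        (barycentric z c) (x (t + 1)) ≤
        (∑ k ∈ Finset.range (M + 1), h (xs' k) (us' k)) + barycentric z c (xs' (M + 1)) := by
      unfold lmpcValue
      exact csInf_le (hQbdd _) ⟨us', xs', feas', rfl⟩
    rw [hcost', hxs'N] at hQle
    have horig : (∑ k ∈ Finset.range (M + 1), h (xs k) (us k))
        = (∑ k ∈ Finset.range M, h (xs (k + 1)) (us (k + 1))) + h (x t) (u t) := by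
      rw [Finset.sum_range_succ', hxs0, hu0]
    rw [horig] at hval
    have hsumc : (∑ i, lam i * h (z i) (v i)) + ∑ i, lam i * c (σ i) = a := by
      rw [ha, ← Finset.sum_add_distrib]
      exact Finset.sum_congr rfl fun i _ => by rw [← mul_add, ← hc i]
    linarith
  -- the value function is nonnegative
  have hQnn : ∀ t, 0 ≤ lmpcValue A B X U (convexHull ℝ (Set.range z)) (M + 1) h
      (barycentric z c) (x t) := by
    intro t
    unfold lmpcValue
    apply Real.sInf_nonneg
    rintro s ⟨us, xs, -, rfl⟩
    exact add_nonneg (Finset.sum_nonneg fun k _ => hnonneg _ _) (hpnn _)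
  -- monotone convergence of the value function and vanishing stage cost
  have hanti : Antitone (fun t => lmpcValue A B X U (convexHull ℝ (Set.range z)) (M + 1) h
      (barycentric z c) (x t)) :=
    antitone_nat_of_succ_le fun t =>
      le_trans (le_add_of_nonneg_right (hnonneg _ _)) (key t)
  have hbb : BddBelow (Set.range (fun t => lmpcValue A B X U (convexHull ℝ (Set.range z))
      (M + 1) h (barycentric z c) (x t))) := by
    refine ⟨0, ?_⟩
    rintro q ⟨t, rfl⟩
    exact hQnn t
  have hQtend := tendsto_atTop_ciInf hanti hbb
  have hshift := hQtend.comp (Filter.tendsto_add_atTop_nat 1)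
  have hdiff : Filter.Tendsto (fun t => lmpcValue A B X U (convexHull ℝ (Set.range z))
      (M + 1) h (barycentric z c) (x t) - lmpcValue A B X U (convexHull ℝ (Set.range z))
      (M + 1) h (barycentric z c) (x (t + 1))) Filter.atTop (nhds 0) := by
    have := hQtend.sub hshift
    simpa [Function.comp] using this
  have hh0 : Filter.Tendsto (fun t => h (x t) (u t)) Filter.atTop (nhds 0) :=
    squeeze_zero (fun t => hnonneg _ _) (fun t => by linarith [key t]) hdiff
  refine ⟨fun t _ => hxX t, ?_⟩
  rw [Metric.tendsto_atTop]
  intro ε hε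
  have hKc : IsCompact (X ∩ {y : Fin n → ℝ | ε ≤ dist y xF}) :=
    hXc.inter_right (isClosed_le continuous_const (Continuous.dist continuous_id continuous_const))
  by_cases hKne : (X ∩ {y : Fin n → ℝ | ε ≤ dist y xF}).Nonempty
  · have hUne : U.Nonempty := ⟨u 0, huU 0⟩
    obtain ⟨⟨y0, w0⟩, hmem, hmin⟩ :=
      (hKc.prod hUc).exists_isMinOn (hKne.prod hUne) hcont.continuousOn
    have hy0K : y0 ∈ X ∩ {y : Fin n → ℝ | ε ≤ dist y xF} := hmem.1
    have hy0ne : y0 ≠ xF := by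
      intro he
      have h2 : ε ≤ dist y0 xF := hy0K.2
      rw [he, dist_self] at h2
      linarith
    have hδ : 0 < h y0 w0 := hposdef y0 w0 hy0ne hmem.2
    have hev : ∀ᶠ t in Filter.atTop, h (x t) (u t) < h y0 w0 :=
      hh0.eventually_lt_const hδ
    obtain ⟨T, hT⟩ := Filter.eventually_atTop.mp hev
    refine ⟨T, fun t ht => ?_⟩
    by_contra hcon
    push_neg at hcon
    have hxtK : x t ∈ X ∩ {y : Fin n → ℝ | ε ≤ dist y xF} := ⟨hxX t, hcon⟩
    have hge : h y0 w0 ≤ h (x t) (u t) :=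
      hmin (Set.mk_mem_prod hxtK (huU t))
    have := hT t ht
    linarith
  · refine ⟨0, fun t _ => ?_⟩
    by_contra hcon
    push_neg at hcon
    exact hKne ⟨x t, hxX t, hcon⟩
end
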